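/- Let G be a codismantlable graph, with codismantling sequence of vertices x_0, x_1, ..., x_k (i.e., setting G_0 = G and G_{i+1} = G_i − x_i, each x_i is codominated in G_i and G_{k+1} is edgeless). Then {x_0, x_1, ..., x_k} is a minimal vertex cover of G. -/

import Mathlib

open SimpleGraph

variable {V : Type*}

/-- The closed neighborhood `N_G[x]` of a vertex. -/
def closedNbhd (G : SimpleGraph V) (x : V) : Set V := insert x (G.neighborSet x)

/-- `x` is codominated: some `y ≠ x` has `N_G[y] ⊆ N_G[x]`. -/
def Codominated (G : SimpleGraph V) (x : V) : Prop :=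
  ∃ y, y ≠ x ∧ closedNbhd G y ⊆ closedNbhd G x

/-- `S` is an independent set of `G`. -/
def IsIndep (G : SimpleGraph V) (S : Set V) : Prop :=
  ∀ ⦃u⦄, u ∈ S → ∀ ⦃v⦄, v ∈ S → ¬ G.Adj u v

/-- `x` is a shedding vertex of `G`: every independent set of `G - N_G[x]`
extends by a neighbor of `x`. -/
def SheddingVertex (G : SimpleGraph V) (x : V) : Prop :=
  ∀ S : Set V, S ⊆ (closedNbhd G x)ᶜ → IsIndep G S →
    ∃ v ∈ G.neighborSet x, IsIndep G (insert v S)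

/-- The closed neighborhood `N_G[I]` of a set of vertices. -/
def closedNbhdSet (G : SimpleGraph V) (I : Set V) : Set V :=
  I ∪ {v | ∃ u ∈ I, G.Adj u v}

/-- `x` is codominated in the subgraph of `G` induced on `A`. -/
def CodominatedOn (G : SimpleGraph V) (A : Finset V) (x : V) : Prop :=
  ∃ y ∈ A, y ≠ x ∧ ∀ z ∈ A, (z = y ∨ G.Adj y z) → (z = x ∨ G.Adj x z)

/-- The subgraph of `G` induced on `A` is codismantlable. -/
def CodismantlableOn (G : SimpleGraph V) [DecidableEq V] (A : Finset V) : Prop :=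
  (∀ x ∈ A, ∀ y ∈ A, ¬ G.Adj x y) ∨
    ∃ x, ∃ h : x ∈ A, CodominatedOn G A x ∧ CodismantlableOn G (A.erase x)
termination_by A.card
decreasing_by exact Finset.card_erase_lt_of_mem h

/-- `G` is codismantlable. -/
def Codismantlable (G : SimpleGraph V) [Fintype V] [DecidableEq V] : Prop :=
  CodismantlableOn G Finset.univ

/-- A maximal independent set of `G`. -/
def MaxIndep (G : SimpleGraph V) (S : Set V) : Prop :=
  IsIndep G S ∧ ∀ T : Set V, IsIndep G T → S ⊆ T → S = T

/-- `G` is well-covered: all maximal independent sets have the same size. -/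
def WellCovered (G : SimpleGraph V) : Prop :=
  ∀ S T : Set V, MaxIndep G S → MaxIndep G T → S.ncard = T.ncard

/-- `G` has no induced cycle of length `n`. -/
def CycleFree (G : SimpleGraph V) (n : ℕ) : Prop :=
  IsEmpty (cycleGraph n ↪g G)

/-- `G` is chordal: no induced cycle of length at least 4. -/
def Chordal (G : SimpleGraph V) : Prop :=
  ∀ n, 4 ≤ n → CycleFree G n

/-- `M` is a matching of `G` (as a set of edges). -/
def IsMatchingSet (G : SimpleGraph V) (M : Finset (Sym2 V)) : Prop :=
  (∀ e ∈ M, e ∈ G.edgeSet) ∧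
    ∀ e ∈ M, ∀ f ∈ M, e ≠ f → ∀ v : V, v ∈ e → v ∉ f

/-- `M` is an induced matching of `G`. -/
def IsInducedMatching (G : SimpleGraph V) (M : Finset (Sym2 V)) : Prop :=
  IsMatchingSet G M ∧
    ∀ e ∈ M, ∀ f ∈ M, e ≠ f → ∀ u : V, u ∈ e → ∀ v : V, v ∈ f → ¬ G.Adj u v

/-- The matching number `m(G)`. -/
noncomputable def matchNum (G : SimpleGraph V) : ℕ :=
  sSup {n | ∃ M : Finset (Sym2 V), IsMatchingSet G M ∧ M.card = n}

/-- The induced matching number `im(G)`. -/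
noncomputable def indMatchNum (G : SimpleGraph V) : ℕ :=
  sSup {n | ∃ M : Finset (Sym2 V), IsInducedMatching G M ∧ M.card = n}

open Classical in
/-- The vertices of `A` outside the closed neighborhood of `x`. -/
noncomputable def delNbhd (G : SimpleGraph V) [DecidableEq V] (A : Finset V) (x : V) : Finset V :=
  A.filter (fun z => ¬(z = x ∨ G.Adj x z))

/-- `x` is a shedding vertex of the subgraph of `G` induced on `A`. -/
def SheddingOn (G : SimpleGraph V) (A : Finset V) (x : V) : Prop :=
  ∀ S : Set V, S ⊆ ↑A → (∀ u ∈ S, ¬(u = x ∨ G.Adj x u)) → IsIndep G S →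
    ∃ v ∈ A, G.Adj x v ∧ IsIndep G (insert v S)

lemma delNbhd_ssubset (G : SimpleGraph V) [DecidableEq V] {A : Finset V} {x : V}
    (h : x ∈ A) : delNbhd G A x ⊂ A := by
  classical
  refine (Finset.ssubset_iff_of_subset (Finset.filter_subset _ _)).mpr ⟨x, h, ?_⟩
  simp [delNbhd]

/-- The subgraph of `G` induced on `A` is vertex decomposable. -/
noncomputable def VertexDecomposableOn (G : SimpleGraph V) [DecidableEq V] (A : Finset V) :
    Prop :=
  (∀ x ∈ A, ∀ y ∈ A, ¬ G.Adj x y) ∨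
    ∃ x, ∃ h : x ∈ A, SheddingOn G A x ∧ VertexDecomposableOn G (A.erase x) ∧
      VertexDecomposableOn G (delNbhd G A x)
termination_by A.card
decreasing_by
  · exact Finset.card_erase_lt_of_mem h
  · exact Finset.card_lt_card (delNbhd_ssubset G h)

/-- `G` is vertex decomposable. -/
noncomputable def VertexDecomposable (G : SimpleGraph V) [Fintype V] [DecidableEq V] : Prop :=
  VertexDecomposableOn G Finset.univ

/-- The restriction of `G` to `A` codismantles to its restriction to `B`. -/
inductive CodisTo (G : SimpleGraph V) [DecidableEq V] : Finset V → Finset V → Prop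
  | refl (A : Finset V) : CodisTo G A A
  | step {A B : Finset V} {x : V} (h : x ∈ A) (hc : CodominatedOn G A x)
      (ht : CodisTo G (A.erase x) B) : CodisTo G A B

/-- `L` is a codismantling sequence for the subgraph of `G` induced on `A`. -/
def CodisSeq (G : SimpleGraph V) [DecidableEq V] : Finset V → List V → Prop
  | A, [] => ∀ x ∈ A, ∀ y ∈ A, ¬ G.Adj x y
  | A, x :: xs => x ∈ A ∧ CodominatedOn G A x ∧ CodisSeq G (A.erase x) xs

/-- `C` is a vertex cover of `G`. -/
def IsVertexCover (G : SimpleGraph V) (C : Set V) : Prop :=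
  ∀ ⦃u v : V⦄, G.Adj u v → u ∈ C ∨ v ∈ C

/-- The co-chordal cover number: the minimum number of co-chordal subgraphs of `G`
covering all edges of `G`. -/
noncomputable def cochord (G : SimpleGraph V) : ℕ :=
  sInf {k | ∃ H : Fin k → G.Subgraph, (∀ i, Chordal ((H i).coeᶜ)) ∧
    ∀ e ∈ G.edgeSet, ∃ i, e ∈ (H i).edgeSet}

/-- The domination number of a graph. -/
noncomputable def domNum {W : Type*} (K : SimpleGraph W) : ℕ :=
  sInf {n | ∃ D : Finset W, (∀ v : W, v ∈ D ∨ ∃ u ∈ D, K.Adj u v) ∧ D.card = n}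


lemma codisSeq_cover [DecidableEq V] (G : SimpleGraph V) :
    ∀ (L : List V) (A : Finset V), CodisSeq G A L →
      ∀ u ∈ A, ∀ v ∈ A, G.Adj u v → u ∈ L ∨ v ∈ L := by
  intro L
  induction L with
  | nil => intro A h u hu v hv hadj; exact absurd hadj (h u hu v hv)
  | cons x xs ih =>
    intro A h u hu v hv hadj
    obtain ⟨hx, _, hrec⟩ := h
    by_cases hux : u = x
    · exact Or.inl (by simp [hux])
    by_cases hvx : v = x
    · exact Or.inr (by simp [hvx])
    rcases ih (A.erase x) hrec u (Finset.mem_erase.mpr ⟨hux, hu⟩)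
        v (Finset.mem_erase.mpr ⟨hvx, hv⟩) hadj with h1 | h1
    · exact Or.inl (List.mem_cons_of_mem _ h1)
    · exact Or.inr (List.mem_cons_of_mem _ h1)

lemma codisSeq_dom [DecidableEq V] (G : SimpleGraph V) :
    ∀ (L : List V) (A : Finset V), CodisSeq G A L →
      ∀ x ∈ A, x ∉ L ∨ ∃ r ∈ A, r ∉ L ∧ G.Adj x r := by
  intro L
  induction L with
  | nil => intro A _ x _; exact Or.inl List.not_mem_nil
  | cons x₀ xs ih =>
    intro A h x hx
    obtain ⟨hx₀, ⟨y, hyA, hyx, hcod⟩, hrec⟩ := h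
    by_cases hxx : x = x₀
    · subst hxx
      have hy' : y ∈ A.erase x := Finset.mem_erase.mpr ⟨hyx, hyA⟩
      rcases ih (A.erase x) hrec y hy' with hnot | ⟨r, hrA, hrL, hradj⟩
      · refine Or.inr ⟨y, hyA, ?_, ?_⟩
        · simp [List.mem_cons, hyx, hnot]
        · rcases hcod y hyA (Or.inl rfl) with h | h
          · exact absurd h hyx
          · exact h
      · have hrA' : r ∈ A := Finset.mem_of_mem_erase hrA
        have hrx : r ≠ x := (Finset.mem_erase.mp hrA).1
        refine Or.inr ⟨r, hrA', ?_, ?_⟩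
        · simp [List.mem_cons, hrx, hrL]
        · rcases hcod r hrA' (Or.inr hradj) with h | h
          · exact absurd h hrx
          · exact h
    · have hx' : x ∈ A.erase x₀ := Finset.mem_erase.mpr ⟨hxx, hx⟩
      rcases ih (A.erase x₀) hrec x hx' with hnot | ⟨r, hrA, hrL, hradj⟩
      · exact Or.inl (by simp [List.mem_cons, hxx, hnot])
      · have hrx₀ : r ≠ x₀ := (Finset.mem_erase.mp hrA).1
        exact Or.inr ⟨r, Finset.mem_of_mem_erase hrA,
          by simp [List.mem_cons, hrx₀, hrL], hradj⟩

/-- the vertices of a codismantling sequence form a minimal vertex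
cover. -/
theorem codisSeq_minimal_vertex_cover [Fintype V] [DecidableEq V]
    (G : SimpleGraph V) (L : List V) (h : CodisSeq G Finset.univ L) :
    _root_.IsVertexCover G {x | x ∈ L} ∧
      ∀ C : Set V, C ⊂ {x | x ∈ L} → ¬ _root_.IsVertexCover G C := by
  constructor
  · intro u v hadj
    exact codisSeq_cover G L Finset.univ h u (Finset.mem_univ u) v (Finset.mem_univ v) hadj
  · intro C hC hcov
    obtain ⟨hsub, hne⟩ := hC
    obtain ⟨x, hxL, hxC⟩ : ∃ x, x ∈ L ∧ x ∉ C := by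
      by_contra hcon
      push_neg at hcon
      exact hne (fun a ha => hcon a ha)
    rcases codisSeq_dom G L Finset.univ h x (Finset.mem_univ x) with hnot | ⟨r, _, hrL, hradj⟩
    · exact hnot hxL
    · rcases hcov hradj with h1 | h1
      · exact hxC h1
      · exact hrL (hsub h1)
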